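/- Let (Λ, dx) be a complete σ-finite measure space with nonzero measure, N ≥ 2 an integer, and u : Λ → ℝ a function. If U = G_{N,1} u (so U(x_1,...,x_N) = N^{-1} Σ_i u(x_i)) belongs to L^∞(Λ^N; d^N x), then u ∈ L^∞(Λ; dx) and ‖u‖_{∞,dx} = ‖U‖_{∞,d^N x}. -/

import Mathlib

open MeasureTheory

open scoped ENNReal

private lemma ae_pi_coord {Λ : Type*} [MeasurableSpace Λ] (μ : Measure Λ) [SigmaFinite μ]
    (N : ℕ) {p : Λ → Prop} (hp : ∀ᵐ a ∂μ, p a) :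
    ∀ᵐ x ∂(Measure.pi fun _ : Fin N => μ), ∀ i, p (x i) := by
  rw [ae_all_iff]
  intro i
  rw [ae_iff] at hp ⊢
  have hZ : μ (toMeasurable μ {a | ¬ p a}) = 0 := by rwa [measure_toMeasurable]
  have hsub : {x : Fin N → Λ | ¬ p (x i)} ⊆ {x : Fin N → Λ | x i ∈ toMeasurable μ {a | ¬ p a}} :=
    fun x hx => subset_toMeasurable μ _ hx
  refine measure_mono_null hsub ?_
  have heq : {x : Fin N → Λ | x i ∈ toMeasurable μ {a | ¬ p a}}
      = Set.pi Set.univ (fun j => if j = i then toMeasurable μ {a | ¬ p a} else Set.univ) := by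
    ext x
    simp only [Set.mem_setOf_eq, Set.mem_pi, Set.mem_univ, true_imp_iff]
    constructor
    · intro h j
      by_cases hj : j = i <;> simp [hj, h]
    · intro h
      have := h i
      simpa using this
  rw [heq, Measure.pi_pi]
  exact Finset.prod_eq_zero (Finset.mem_univ i) (by simp [hZ])

/-- If `U(x₁,…,x_N) = N⁻¹ ∑ᵢ u(xᵢ)` is in `L^∞(Λ^N; d^N x)`, then
`u ∈ L^∞(Λ; dx)` and `‖u‖_{∞,dx} = ‖U‖_{∞,d^N x}`. -/
theorem memLp_top_of_mean_memLp_top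
    {Λ : Type*} [MeasurableSpace Λ] (μ : Measure Λ) [SigmaFinite μ] (hμ : μ ≠ 0)
    (N : ℕ) (hN : 2 ≤ N) (u : Λ → ℝ) (U : (Fin N → Λ) → ℝ)
    (hU : ∀ x, U x = (N : ℝ)⁻¹ * ∑ i, u (x i))
    (hUinf : MemLp U ⊤ (Measure.pi fun _ : Fin N => μ)) :
    MemLp u ⊤ μ ∧ eLpNorm u ⊤ μ = eLpNorm U ⊤ (Measure.pi fun _ : Fin N => μ) := by
  obtain ⟨n, rfl⟩ : ∃ n, N = n + 1 := ⟨N - 1, by omega⟩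
  set ν : Measure (Fin (n + 1) → Λ) := Measure.pi fun _ => μ with hνdef
  set ν' : Measure (Fin n → Λ) := Measure.pi fun _ => μ with hν'def
  have hμuniv : μ Set.univ ≠ 0 := by
    simpa [Measure.measure_univ_eq_zero] using hμ
  have hν'0 : ν' ≠ 0 := by
    intro h
    have h0 : ν' Set.univ = 0 := by rw [h]; simp
    rw [hν'def, Measure.pi_univ] at h0
    rcases Finset.prod_eq_zero_iff.1 h0 with ⟨i, -, h⟩
    exact hμuniv h
  have hNpos : (0 : ℝ) < ((n + 1 : ℕ) : ℝ) := by positivity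
  have hNne : ((n + 1 : ℕ) : ℝ) ≠ 0 := hNpos.ne'
  set L : ℝ≥0∞ := eLpNormEssSup U ν with hLdef
  have hLtop : L ≠ ⊤ := by
    have := hUinf.2
    rw [eLpNorm_exponent_top] at this
    exact this.ne
  -- measure-preserving map from ν'.prod μ to ν
  have hmp : MeasurePreserving (MeasurableEquiv.piFinSuccAbove (fun _ : Fin (n + 1) => Λ) 0) ν
      (μ.prod ν') := measurePreserving_piFinSuccAbove (fun _ => μ) 0
  have hψ : MeasurePreserving
      ((MeasurableEquiv.piFinSuccAbove (fun _ : Fin (n + 1) => Λ) 0).symm ∘ Prod.swap)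
      (ν'.prod μ) ν :=
    (hmp.symm _).comp (Measure.measurePreserving_swap)
  set F : (Fin n → Λ) × Λ → ℝ :=
    U ∘ ((MeasurableEquiv.piFinSuccAbove (fun _ : Fin (n + 1) => Λ) 0).symm ∘ Prod.swap)
    with hFdef
  have hF : AEStronglyMeasurable F (ν'.prod μ) := hUinf.1.comp_measurePreserving hψ
  have hbd : ∀ᵐ q ∂(ν'.prod μ), (‖F q‖₊ : ℝ≥0∞) ≤ L := by
    have h1 : ∀ᵐ x ∂ν, (‖U x‖₊ : ℝ≥0∞) ≤ L := ae_le_eLpNormEssSup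
    exact hψ.quasiMeasurePreserving.ae h1
  have key := Measure.ae_ae_of_ae_prod (hF.ae_eq_mk.and hbd)
  haveI : (ae ν').NeBot := ae_neBot.2 hν'0
  obtain ⟨y₀, hy₀⟩ := key.exists
  -- value of F on sections
  have hψval : ∀ a : Λ, ((MeasurableEquiv.piFinSuccAbove (fun _ : Fin (n + 1) => Λ) 0).symm
      (a, y₀)) = Fin.cons a y₀ := by
    intro a
    simp [MeasurableEquiv.piFinSuccAbove, Fin.insertNthEquiv, Fin.insertNth_zero']
  set c : ℝ := ∑ j, u (y₀ j) with hcdef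
  have hFa : ∀ a : Λ, F (y₀, a) = ((n + 1 : ℕ) : ℝ)⁻¹ * (u a + c) := by
    intro a
    rw [hFdef]
    simp only [Function.comp_apply, Prod.swap_prod_mk]
    rw [hψval a, hU]
    rw [Fin.sum_univ_succ]
    simp [hcdef]
  have hua : ∀ a : Λ, u a = ((n + 1 : ℕ) : ℝ) * F (y₀, a) - c := by
    intro a
    rw [hFa a, mul_inv_cancel_left₀ hNne]
    ring
  -- measurability of u
  have hGy : StronglyMeasurable fun a : Λ => hF.mk F (y₀, a) :=
    hF.stronglyMeasurable_mk.comp_measurable (measurable_const.prodMk measurable_id)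
  have husm : AEStronglyMeasurable u μ := by
    have hsm : StronglyMeasurable fun a : Λ => ((n + 1 : ℕ) : ℝ) * hF.mk F (y₀, a) - c :=
      (stronglyMeasurable_const.mul hGy).sub stronglyMeasurable_const
    refine hsm.aestronglyMeasurable.congr ?_
    filter_upwards [hy₀] with a ha
    rw [hua a, ha.1]
  -- boundedness of u
  have habs : ∀ᵐ a ∂μ, ‖u a‖ ≤ ((n + 1 : ℕ) : ℝ) * L.toReal + ‖c‖ := by
    filter_upwards [hy₀] with a ha
    have h2 : ‖F (y₀, a)‖ ≤ L.toReal := by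
      have := ENNReal.toReal_mono hLtop ha.2
      simpa using this
    calc ‖u a‖ = ‖((n + 1 : ℕ) : ℝ) * F (y₀, a) - c‖ := by rw [hua a]
      _ ≤ ‖((n + 1 : ℕ) : ℝ) * F (y₀, a)‖ + ‖c‖ := norm_sub_le _ _
      _ ≤ ((n + 1 : ℕ) : ℝ) * L.toReal + ‖c‖ := by
          rw [norm_mul, Real.norm_natCast]
          gcongr
  have hmem : MemLp u ⊤ μ := memLp_top_of_bound husm _ habs
  refine ⟨hmem, ?_⟩
  -- replace u by a measurable representative
  set v : Λ → ℝ := husm.mk u with hvdef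
  have huv : u =ᵐ[μ] v := husm.ae_eq_mk
  have hvm : Measurable v := husm.stronglyMeasurable_mk.measurable
  set V : (Fin (n + 1) → Λ) → ℝ := fun x => ((n + 1 : ℕ) : ℝ)⁻¹ * ∑ i, v (x i) with hVdef
  have hUV : U =ᵐ[ν] V := by
    filter_upwards [ae_pi_coord μ (n + 1) huv] with x hx
    rw [hU x, hVdef]
    congr 1
    exact Finset.sum_congr rfl fun i _ => hx i
  rw [eLpNorm_congr_ae huv, eLpNorm_congr_ae hUV, eLpNorm_exponent_top, eLpNorm_exponent_top]
  set K : ℝ≥0∞ := eLpNormEssSup v μ with hKdef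
  set L' : ℝ≥0∞ := eLpNormEssSup V ν with hL'def
  have hL'L : L' = L := by
    rw [hL'def, hLdef, eLpNormEssSup_congr_ae hUV.symm]
  have hL'top : L' ≠ ⊤ := by rw [hL'L]; exact hLtop
  have hKtop : K ≠ ⊤ := by
    have := hmem.2
    rw [eLpNorm_exponent_top, eLpNormEssSup_congr_ae huv, ← hKdef] at this
    exact this.ne
  set t : ℝ := L'.toReal with htdef
  have ht0 : 0 ≤ t := ENNReal.toReal_nonneg
  -- main lemma: any function w whose mean is a.e. bounded by L' satisfies μ {t < w} = 0
  have main : ∀ w : Λ → ℝ, Measurable w →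
      (∀ᵐ x ∂ν, (‖((n + 1 : ℕ) : ℝ)⁻¹ * ∑ i, w (x i)‖₊ : ℝ≥0∞) ≤ L') →
      μ {a | t < w a} = 0 := by
    intro w hw hbound
    by_contra hS
    set S : Set Λ := {a | t < w a} with hSdef
    set T : Set (Fin (n + 1) → Λ) := Set.pi Set.univ fun _ => S with hTdef
    have hνT : ν T ≠ 0 := by
      rw [hTdef, hνdef, Measure.pi_pi]
      exact Finset.prod_ne_zero_iff.2 fun _ _ => hS
    rw [ae_iff] at hbound
    have hint : ν (T ∩ {x | (‖((n + 1 : ℕ) : ℝ)⁻¹ * ∑ i, w (x i)‖₊ : ℝ≥0∞) ≤ L'}) ≠ 0 := by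
      intro h0
      apply hνT
      have hsub : T ⊆ (T ∩ {x | (‖((n + 1 : ℕ) : ℝ)⁻¹ * ∑ i, w (x i)‖₊ : ℝ≥0∞) ≤ L'})
          ∪ {x | ¬ (‖((n + 1 : ℕ) : ℝ)⁻¹ * ∑ i, w (x i)‖₊ : ℝ≥0∞) ≤ L'} := by
        intro x hx
        by_cases hx2 : (‖((n + 1 : ℕ) : ℝ)⁻¹ * ∑ i, w (x i)‖₊ : ℝ≥0∞) ≤ L'
        · exact Or.inl ⟨hx, hx2⟩
        · exact Or.inr hx2
      have hle : ν T ≤ 0 :=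
        calc ν T ≤ ν _ := measure_mono hsub
        _ ≤ ν (T ∩ {x | (‖((n + 1 : ℕ) : ℝ)⁻¹ * ∑ i, w (x i)‖₊ : ℝ≥0∞) ≤ L'})
            + ν {x | ¬ (‖((n + 1 : ℕ) : ℝ)⁻¹ * ∑ i, w (x i)‖₊ : ℝ≥0∞) ≤ L'} := measure_union_le _ _
        _ = 0 := by rw [h0, hbound]; simp
      exact le_antisymm hle (zero_le)
    obtain ⟨x, hxT, hx2⟩ := nonempty_of_measure_ne_zero hint
    have hxi : ∀ i, t < w (x i) := by
      intro i
      have := hxT i (Set.mem_univ i)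
      exact this
    have hsum : ((n + 1 : ℕ) : ℝ) * t < ∑ i, w (x i) := by
      have := Finset.sum_lt_sum_of_nonempty (Finset.univ_nonempty (α := Fin (n + 1)))
        (f := fun _ => t) (g := fun i => w (x i)) (fun i _ => hxi i)
      simpa [Finset.sum_const, Finset.card_univ, mul_comm] using this
    have hVx : t < ((n + 1 : ℕ) : ℝ)⁻¹ * ∑ i, w (x i) := by
      have := mul_lt_mul_of_pos_left hsum (inv_pos.2 hNpos)
      rwa [inv_mul_cancel_left₀ hNne] at this
    have hle : ‖((n + 1 : ℕ) : ℝ)⁻¹ * ∑ i, w (x i)‖ ≤ t := by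
      have := ENNReal.toReal_mono hL'top hx2
      simpa [htdef] using this
    have : t < t := lt_of_lt_of_le (lt_of_lt_of_le hVx (le_abs_self _)) hle
    exact lt_irrefl t this
  -- the two bounds
  apply le_antisymm
  · -- K ≤ L'
    have hbV : ∀ᵐ x ∂ν, (‖V x‖₊ : ℝ≥0∞) ≤ L' := ae_le_eLpNormEssSup
    have hpos : μ {a | t < v a} = 0 := main v hvm hbV
    have hneg : μ {a | t < -v a} = 0 := by
      refine main (fun a => -v a) hvm.neg ?_
      refine hbV.mono fun x hx => ?_
      have : ‖((n + 1 : ℕ) : ℝ)⁻¹ * ∑ i, -v (x i)‖₊ = ‖V x‖₊ := by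
        rw [hVdef]
        simp only [Finset.sum_neg_distrib, mul_neg, nnnorm_neg]
      rwa [this]
    have hae : ∀ᵐ a ∂μ, ‖v a‖ ≤ t := by
      rw [ae_iff]
      have hsub : {a | ¬ ‖v a‖ ≤ t} ⊆ {a | t < v a} ∪ {a | t < -v a} := by
        intro a ha
        simp only [Set.mem_setOf_eq, not_le] at ha
        rcases lt_abs.1 (by simpa [Real.norm_eq_abs] using ha) with h | h
        · exact Or.inl h
        · exact Or.inr h
      exact measure_mono_null hsub (le_antisymm
        ((measure_union_le _ _).trans (by rw [hpos, hneg]; simp)) (zero_le))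
    calc K ≤ ENNReal.ofReal t := eLpNormEssSup_le_of_ae_bound hae
      _ = L' := by rw [htdef, ENNReal.ofReal_toReal hL'top]
  · -- L' ≤ K
    have h1 : ∀ᵐ x ∂ν, ∀ i, (‖v (x i)‖₊ : ℝ≥0∞) ≤ K :=
      ae_pi_coord μ (n + 1) (ae_le_eLpNormEssSup (f := v) (μ := μ))
    have h2 : ∀ᵐ x ∂ν, ‖V x‖ ≤ K.toReal := by
      filter_upwards [h1] with x hx
      have hxe : ∀ i, ‖v (x i)‖ ≤ K.toReal := by
        intro i
        have := ENNReal.toReal_mono hKtop (hx i)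
        simpa using this
      rw [hVdef]
      calc ‖((n + 1 : ℕ) : ℝ)⁻¹ * ∑ i, v (x i)‖
          = ((n + 1 : ℕ) : ℝ)⁻¹ * ‖∑ i, v (x i)‖ := by
            rw [norm_mul, Real.norm_eq_abs (((n + 1 : ℕ) : ℝ)⁻¹), abs_of_pos (inv_pos.2 hNpos)]
        _ ≤ ((n + 1 : ℕ) : ℝ)⁻¹ * ∑ i, ‖v (x i)‖ := by
            gcongr
            exact norm_sum_le _ _
        _ ≤ ((n + 1 : ℕ) : ℝ)⁻¹ * ∑ _i : Fin (n + 1), K.toReal := by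
            gcongr with i
            exact hxe i
        _ = K.toReal := by
            rw [Finset.sum_const, Finset.card_univ, Fintype.card_fin, nsmul_eq_mul,
              inv_mul_cancel_left₀ hNne]
    calc L' ≤ ENNReal.ofReal K.toReal := eLpNormEssSup_le_of_ae_bound h2
      _ = K := ENNReal.ofReal_toReal hKtop
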